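/- Let Ω ⊂ ℂ² be a bounded domain containing the origin and satisfying (H1) and (H2). Let w¹ = (w¹_1, w¹_2) and w² = (w²_1, w²_2) be pairs of bounded smooth functions Ω → ℂ such that: (i) ∂w¹_1/∂z̄_2 = ∂w¹_2/∂z̄_1 and ∂w²_1/∂z̄_2 = ∂w²_2/∂z̄_1 on Ω; (ii) z_1 w¹_k + z_2 w²_k = 0 on Ω for k = 1, 2; (iii) there is ε > 0 such that w¹_k and w²_k vanish on the set {z ∈ Ω : |z| < ε}. Then there exists a bounded smooth function H : Ω → ℂ such that w¹_k = −z_2 ∂H/∂z̄_k and w²_k = z_1 ∂H/∂z̄_k on Ω for k = 1, 2. -/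

import Mathlib

/-- The Wirtinger derivative `∂f/∂z̄₁` of `f : ℂ² → ℂ` at `z`:
`(1/2)(∂f/∂x₁ + i ∂f/∂y₁)`, computed from the real Fréchet derivative. -/
noncomputable def d1bar (f : ℂ × ℂ → ℂ) (z : ℂ × ℂ) : ℂ :=
  (1 / 2) * (fderiv ℝ f z (1, 0) + Complex.I * fderiv ℝ f z (Complex.I, 0))

/-- The Wirtinger derivative `∂f/∂z̄₂` of `f : ℂ² → ℂ` at `z`:
`(1/2)(∂f/∂x₂ + i ∂f/∂y₂)`, computed from the real Fréchet derivative. -/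
noncomputable def d2bar (f : ℂ × ℂ → ℂ) (z : ℂ × ℂ) : ℂ :=
  (1 / 2) * (fderiv ℝ f z (0, 1) + Complex.I * fderiv ℝ f z (0, Complex.I))

lemma fderiv_fst_mul (f : ℂ × ℂ → ℂ) (z : ℂ × ℂ) (hf : DifferentiableAt ℝ f z) (v : ℂ × ℂ) :
    fderiv ℝ (fun w => w.1 * f w) z v = v.1 * f z + z.1 * fderiv ℝ f z v := by
  have h1 : DifferentiableAt ℝ (fun w : ℂ × ℂ => w.1) z := differentiable_fst.differentiableAt
  rw [fderiv_fun_mul h1 hf]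
  simp [ContinuousLinearMap.add_apply, ContinuousLinearMap.smul_apply, smul_eq_mul, fderiv_fst]
  ring

lemma fderiv_snd_mul (f : ℂ × ℂ → ℂ) (z : ℂ × ℂ) (hf : DifferentiableAt ℝ f z) (v : ℂ × ℂ) :
    fderiv ℝ (fun w => w.2 * f w) z v = v.2 * f z + z.2 * fderiv ℝ f z v := by
  have h1 : DifferentiableAt ℝ (fun w : ℂ × ℂ => w.2) z := differentiable_snd.differentiableAt
  rw [fderiv_fun_mul h1 hf]
  simp [ContinuousLinearMap.add_apply, ContinuousLinearMap.smul_apply, smul_eq_mul, fderiv_snd]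
  ring

lemma d1bar_fst_mul (f : ℂ × ℂ → ℂ) (z : ℂ × ℂ) (hf : DifferentiableAt ℝ f z) :
    d1bar (fun w => w.1 * f w) z = z.1 * d1bar f z := by
  unfold d1bar
  rw [fderiv_fst_mul f z hf, fderiv_fst_mul f z hf]
  simp only []
  linear_combination (1/2 * f z) * Complex.I_mul_I

lemma d2bar_fst_mul (f : ℂ × ℂ → ℂ) (z : ℂ × ℂ) (hf : DifferentiableAt ℝ f z) :
    d2bar (fun w => w.1 * f w) z = z.1 * d2bar f z := by
  unfold d2bar
  rw [fderiv_fst_mul f z hf, fderiv_fst_mul f z hf]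
  ring

lemma d1bar_snd_mul (f : ℂ × ℂ → ℂ) (z : ℂ × ℂ) (hf : DifferentiableAt ℝ f z) :
    d1bar (fun w => w.2 * f w) z = z.2 * d1bar f z := by
  unfold d1bar
  rw [fderiv_snd_mul f z hf, fderiv_snd_mul f z hf]
  ring

lemma d2bar_snd_mul (f : ℂ × ℂ → ℂ) (z : ℂ × ℂ) (hf : DifferentiableAt ℝ f z) :
    d2bar (fun w => w.2 * f w) z = z.2 * d2bar f z := by
  unfold d2bar
  rw [fderiv_snd_mul f z hf, fderiv_snd_mul f z hf]
  linear_combination (1/2 * f z) * Complex.I_mul_I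

lemma d1bar_neg (f : ℂ × ℂ → ℂ) (z : ℂ × ℂ) :
    d1bar (fun w => -f w) z = -d1bar f z := by
  unfold d1bar; rw [fderiv_fun_neg]; simp; ring

lemma d2bar_neg (f : ℂ × ℂ → ℂ) (z : ℂ × ℂ) :
    d2bar (fun w => -f w) z = -d2bar f z := by
  unfold d2bar; rw [fderiv_fun_neg]; simp; ring

lemma d1bar_congr {f g : ℂ × ℂ → ℂ} {z : ℂ × ℂ} (h : f =ᶠ[nhds z] g) :
    d1bar f z = d1bar g z := by
  unfold d1bar; rw [h.fderiv_eq]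

lemma d2bar_congr {f g : ℂ × ℂ → ℂ} {z : ℂ × ℂ} (h : f =ᶠ[nhds z] g) :
    d2bar f z = d2bar g z := by
  unfold d2bar; rw [h.fderiv_eq]

lemma d1bar_zero (z : ℂ × ℂ) : d1bar (fun _ => (0:ℂ)) z = 0 := by
  unfold d1bar; simp

lemma d2bar_zero (z : ℂ × ℂ) : d2bar (fun _ => (0:ℂ)) z = 0 := by
  unfold d2bar; simp

/-- `f` is bounded on `Ω` and smooth (in the underlying real variables) on `Ω`. -/
def BddSmoothOn (Ω : Set (ℂ × ℂ)) (f : ℂ × ℂ → ℂ) : Prop :=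
  ContDiffOn ℝ (⊤ : ℕ∞) f Ω ∧ ∃ C, ∀ z ∈ Ω, ‖f z‖ ≤ C

/-- Hypothesis (H1): every `∂̄`-closed bounded smooth `(0,1)`-form on `Ω` is `∂̄u` for a
bounded smooth function `u`. -/
def H1 (Ω : Set (ℂ × ℂ)) : Prop :=
  ∀ β₁ β₂ : ℂ × ℂ → ℂ, BddSmoothOn Ω β₁ → BddSmoothOn Ω β₂ →
    (∀ z ∈ Ω, d2bar β₁ z = d1bar β₂ z) →
    ∃ u : ℂ × ℂ → ℂ, BddSmoothOn Ω u ∧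
      (∀ z ∈ Ω, d1bar u z = β₁ z) ∧ (∀ z ∈ Ω, d2bar u z = β₂ z)

/-- Hypothesis (H2): every bounded smooth `(0,2)`-form on `Ω` is `∂̄` of a bounded smooth
`(0,1)`-form. -/
def H2 (Ω : Set (ℂ × ℂ)) : Prop :=
  ∀ β : ℂ × ℂ → ℂ, BddSmoothOn Ω β →
    ∃ u₁ u₂ : ℂ × ℂ → ℂ, BddSmoothOn Ω u₁ ∧ BddSmoothOn Ω u₂ ∧
      ∀ z ∈ Ω, d1bar u₂ z - d2bar u₁ z = β z

/-- The `∂̄`-Koszul complex proposition in `ℂ²` (case `r = 1`, `s = 1`, `F = (z₁, z₂)`),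
for bounded smooth data. -/
theorem koszul_dim_two_Linf (Ω : Set (ℂ × ℂ))
    (hopen : IsOpen Ω) (hconn : IsConnected Ω) (hbdd : Bornology.IsBounded Ω)
    (h0 : (0, 0) ∈ Ω) (h1 : H1 Ω) (h2 : H2 Ω)
    (w1 w2 : Fin 2 → ℂ × ℂ → ℂ)
    (hw1sm : ∀ k, BddSmoothOn Ω (w1 k)) (hw2sm : ∀ k, BddSmoothOn Ω (w2 k))
    (hw1cl : ∀ z ∈ Ω, d2bar (w1 0) z = d1bar (w1 1) z)
    (hw2cl : ∀ z ∈ Ω, d2bar (w2 0) z = d1bar (w2 1) z)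
    (htau : ∀ k, ∀ z ∈ Ω, z.1 * w1 k z + z.2 * w2 k z = 0)
    (hsupp : ∃ ε > 0, ∀ k, ∀ z ∈ Ω, ‖z.1‖ ^ 2 + ‖z.2‖ ^ 2 < ε ^ 2 →
      w1 k z = 0 ∧ w2 k z = 0) :
    ∃ H : ℂ × ℂ → ℂ, BddSmoothOn Ω H ∧
      (∀ z ∈ Ω, w1 0 z = -z.2 * d1bar H z) ∧
      (∀ z ∈ Ω, w1 1 z = -z.2 * d2bar H z) ∧
      (∀ z ∈ Ω, w2 0 z = z.1 * d1bar H z) ∧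
      (∀ z ∈ Ω, w2 1 z = z.1 * d2bar H z) := by
  obtain ⟨ε, hε, hεsupp⟩ := hsupp
  set g : Fin 2 → ℂ × ℂ → ℂ :=
    fun k z => if z.1 = 0 then -w1 k z / z.2 else w2 k z / z.1 with hgdef
  -- identity (b): on Ω where z.2 ≠ 0, g = -w1/z.2
  have hb : ∀ k, ∀ z ∈ Ω, z.2 ≠ 0 → g k z = -w1 k z / z.2 := by
    intro k z hz hz2
    by_cases hz1 : z.1 = 0
    · simp [hgdef, hz1]
    · have ht := htau k z hz
      simp only [hgdef, if_neg hz1]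
      field_simp
      linear_combination ht
  -- identity (c): g vanishes on the small ball
  have hc : ∀ k, ∀ z ∈ Ω, ‖z.1‖ ^ 2 + ‖z.2‖ ^ 2 < ε ^ 2 → g k z = 0 := by
    intro k z hz hlt
    obtain ⟨e1, e2⟩ := hεsupp k z hz hlt
    by_cases hz1 : z.1 = 0 <;> simp [hgdef, hz1, e1, e2]
  -- key identity on Ω
  have hkey : ∀ k, ∀ z ∈ Ω, w1 k z = -z.2 * g k z ∧ w2 k z = z.1 * g k z := by
    intro k z hz
    by_cases hz1 : z.1 = 0
    · by_cases hz2 : z.2 = 0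
      · have hlt : ‖z.1‖ ^ 2 + ‖z.2‖ ^ 2 < ε ^ 2 := by
          rw [hz1, hz2]; simp; positivity
        obtain ⟨e1, e2⟩ := hεsupp k z hz hlt
        have e3 := hc k z hz hlt
        exact ⟨by rw [e1, e3]; ring, by rw [e2, e3]; ring⟩
      · have hbz := hb k z hz hz2
        have ht := htau k z hz
        rw [hz1] at ht
        have hw2 : w2 k z = 0 := by
          have : z.2 * w2 k z = 0 := by linear_combination ht
          rcases mul_eq_zero.1 this with h' | h'
          · exact absurd h' hz2
          · exact h'
        refine ⟨?_, ?_⟩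
        · rw [hbz]; field_simp
        · rw [hz1, hw2]; ring
    · have hgz : g k z = w2 k z / z.1 := by simp [hgdef, hz1]
      have ht := htau k z hz
      refine ⟨?_, ?_⟩
      · rw [hgz]; field_simp; linear_combination ht
      · rw [hgz]; field_simp
  -- smoothness of g
  have hsm : ∀ k, ContDiffOn ℝ (⊤ : ℕ∞) (g k) Ω := by
    intro k z hz
    by_cases hz1 : z.1 ≠ 0
    · have hU : {w : ℂ × ℂ | w.1 ≠ 0} ∈ nhds z :=
        (isOpen_ne.preimage continuous_fst).mem_nhds hz1
      have hcd : ContDiffWithinAt ℝ (⊤ : ℕ∞) (fun w : ℂ × ℂ => w2 k w / w.1) Ω z := by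
        simp only [div_eq_mul_inv]
        exact ((hw2sm k).1 z hz).mul ((contDiff_fst.contDiffWithinAt).inv hz1)
      refine hcd.congr_of_eventuallyEq ?_ (by simp [hgdef, hz1])
      filter_upwards [mem_nhdsWithin_of_mem_nhds hU] with w hw
      simp [hgdef, hw]
    · push_neg at hz1
      by_cases hz2 : z.2 ≠ 0
      · have hV : {w : ℂ × ℂ | w.2 ≠ 0} ∈ nhds z :=
          (isOpen_ne.preimage continuous_snd).mem_nhds hz2
        have hcd : ContDiffWithinAt ℝ (⊤ : ℕ∞) (fun w : ℂ × ℂ => -w1 k w / w.2) Ω z := by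
          simp only [div_eq_mul_inv]
          exact (((hw1sm k).1 z hz).neg).mul ((contDiff_snd.contDiffWithinAt).inv hz2)
        refine hcd.congr_of_eventuallyEq ?_ (by rw [hb k z hz hz2])
        filter_upwards [mem_nhdsWithin_of_mem_nhds hV, self_mem_nhdsWithin] with w hw hwΩ
        exact hb k w hwΩ hw
      · push_neg at hz2
        have hz0 : z = ((0 : ℂ), (0 : ℂ)) := Prod.ext hz1 hz2
        have hB : {w : ℂ × ℂ | ‖w.1‖ ^ 2 + ‖w.2‖ ^ 2 < ε ^ 2} ∈ nhds z := by
          refine (isOpen_lt ((continuous_fst.norm.pow 2).add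
            (continuous_snd.norm.pow 2)) continuous_const).mem_nhds ?_
          rw [hz0]; simp; positivity
        have hcd : ContDiffWithinAt ℝ (⊤ : ℕ∞) (fun _ : ℂ × ℂ => (0 : ℂ)) Ω z :=
          contDiffWithinAt_const
        refine hcd.congr_of_eventuallyEq ?_ ?_
        · filter_upwards [mem_nhdsWithin_of_mem_nhds hB, self_mem_nhdsWithin] with w hw hwΩ
          exact hc k w hwΩ hw
        · refine hc k z hz ?_
          rw [hz0]; simp; positivity
  -- boundedness of g
  have hbound : ∀ k, ∃ C, ∀ z ∈ Ω, ‖g k z‖ ≤ C := by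
    intro k
    obtain ⟨C1, hC1⟩ := (hw1sm k).2
    obtain ⟨C2, hC2⟩ := (hw2sm k).2
    refine ⟨2 * (max C1 0 + max C2 0) / ε, ?_⟩
    intro z hz
    by_cases hsmall : ‖z.1‖ ^ 2 + ‖z.2‖ ^ 2 < ε ^ 2
    · rw [hc k z hz hsmall]; simp; positivity
    · push_neg at hsmall
      by_cases hz1 : ε / 2 ≤ ‖z.1‖
      · have hz1' : z.1 ≠ 0 := by
          intro h'
          rw [h'] at hz1; simp at hz1; linarith
        have hgz : g k z = w2 k z / z.1 := by simp [hgdef, hz1']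
        rw [hgz, norm_div]
        rw [div_le_div_iff₀ (lt_of_lt_of_le (by positivity) hz1) hε]
        have h₁ : ‖w2 k z‖ ≤ max C2 0 := le_trans (hC2 z hz) (le_max_left _ _)
        nlinarith [le_max_right C1 (0:ℝ), norm_nonneg (w2 k z)]
      · push_neg at hz1
        have hz2 : ε / 2 ≤ ‖z.2‖ := by
          by_contra hcon
          push_neg at hcon
          nlinarith [norm_nonneg z.1, norm_nonneg z.2]
        have hz2' : z.2 ≠ 0 := by
          intro h'
          rw [h'] at hz2; simp at hz2; linarith
        rw [hb k z hz hz2', norm_div, norm_neg]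
        rw [div_le_div_iff₀ (lt_of_lt_of_le (by positivity) hz2) hε]
        have h₁ : ‖w1 k z‖ ≤ max C1 0 := le_trans (hC1 z hz) (le_max_left _ _)
        nlinarith [le_max_right C2 (0:ℝ), norm_nonneg (w1 k z)]
  have hdiff : ∀ k, ∀ z ∈ Ω, DifferentiableAt ℝ (g k) z := fun k z hz =>
    (((hsm k).contDiffAt (hopen.mem_nhds hz)).differentiableAt (by simp))
  -- closedness of (g 0, g 1)
  have hclosed : ∀ z ∈ Ω, d2bar (g 0) z = d1bar (g 1) z := by
    intro z hz
    have hEq1 : ∀ k, w1 k =ᶠ[nhds z] fun w => -(w.2 * g k w) := by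
      intro k
      filter_upwards [hopen.mem_nhds hz] with w hw
      rw [(hkey k w hw).1]; ring
    have hEq2 : ∀ k, w2 k =ᶠ[nhds z] fun w => w.1 * g k w := by
      intro k
      filter_upwards [hopen.mem_nhds hz] with w hw
      exact (hkey k w hw).2
    by_cases hz2 : z.2 ≠ 0
    · have e1 : d2bar (w1 0) z = -(z.2 * d2bar (g 0) z) := by
        rw [d2bar_congr (hEq1 0)]
        have e := d2bar_neg (fun w : ℂ × ℂ => w.2 * g 0 w) z
        rw [d2bar_snd_mul _ _ (hdiff 0 z hz)] at e
        exact e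
      have e2 : d1bar (w1 1) z = -(z.2 * d1bar (g 1) z) := by
        rw [d1bar_congr (hEq1 1)]
        have e := d1bar_neg (fun w : ℂ × ℂ => w.2 * g 1 w) z
        rw [d1bar_snd_mul _ _ (hdiff 1 z hz)] at e
        exact e
      have hcl := hw1cl z hz
      rw [e1, e2] at hcl
      have h' : z.2 * d2bar (g 0) z = z.2 * d1bar (g 1) z := by linear_combination -hcl
      exact mul_left_cancel₀ hz2 h'
    · push_neg at hz2
      by_cases hz1 : z.1 ≠ 0
      · have e1 : d2bar (w2 0) z = z.1 * d2bar (g 0) z := by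
          rw [d2bar_congr (hEq2 0)]
          exact d2bar_fst_mul _ _ (hdiff 0 z hz)
        have e2 : d1bar (w2 1) z = z.1 * d1bar (g 1) z := by
          rw [d1bar_congr (hEq2 1)]
          exact d1bar_fst_mul _ _ (hdiff 1 z hz)
        have hcl := hw2cl z hz
        rw [e1, e2] at hcl
        exact mul_left_cancel₀ hz1 hcl
      · push_neg at hz1
        have hz0 : z = ((0 : ℂ), (0 : ℂ)) := Prod.ext hz1 hz2
        have hB : {w : ℂ × ℂ | ‖w.1‖ ^ 2 + ‖w.2‖ ^ 2 < ε ^ 2} ∈ nhds z := by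
          refine (isOpen_lt ((continuous_fst.norm.pow 2).add
            (continuous_snd.norm.pow 2)) continuous_const).mem_nhds ?_
          rw [hz0]; simp; positivity
        have hg0 : ∀ k : Fin 2, g k =ᶠ[nhds z] fun _ => (0 : ℂ) := by
          intro k
          filter_upwards [hB, hopen.mem_nhds hz] with w hw hwΩ
          exact hc k w hwΩ hw
        rw [d2bar_congr (hg0 0), d1bar_congr (hg0 1), d1bar_zero, d2bar_zero]
  obtain ⟨u, husm, hu1, hu2⟩ := h1 (g 0) (g 1) ⟨hsm 0, hbound 0⟩ ⟨hsm 1, hbound 1⟩ hclosed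
  refine ⟨u, husm, ?_, ?_, ?_, ?_⟩ <;> intro z hz
  · rw [hu1 z hz]; exact (hkey 0 z hz).1
  · rw [hu2 z hz]; exact (hkey 1 z hz).1
  · rw [hu1 z hz]; exact (hkey 0 z hz).2
  · rw [hu2 z hz]; exact (hkey 1 z hz).2
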